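/- Assume n ≥ 3, the dual graph Γ of A is a generalized cycle (any two distinct vertices of Γ lie on a common cycle of Γ), and C(A)_i ≤ 0 for all i. Then A satisfies (NN) if and only if there exist at least two indices i with C(A)_i < 0. -/

import Mathlib

/-- `A` is negative definite: `xᵀAx < 0` for every nonzero real vector `x`. -/
def NegDefQ {V : Type*} [Fintype V] (A : Matrix V V ℚ) : Prop :=
  ∀ x : V → ℝ, x ≠ 0 → ∑ i, ∑ j, x i * (A i j : ℝ) * x j < 0

/-- Numerical Nash condition `NN_(i,j)`: for every rational vector `C` with nonpositive
entries there is an integer vector `X` with positive entries such that `(AX)_k ≤ C_k`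
for all `k` and `X i < X j`. -/
def NashNN {V : Type*} [Fintype V] (A : Matrix V V ℚ) (i j : V) : Prop :=
  ∀ C : V → ℚ, (∀ k, C k ≤ 0) →
    ∃ X : V → ℤ, (∀ k, 0 < X k) ∧ (∀ k, ∑ t, A k t * (X t : ℚ) ≤ C k) ∧ X i < X j

/-- Condition `(NN)`: `NN_(i,j)` for every ordered pair of distinct indices. -/
def NashNNAll {V : Type*} [Fintype V] (A : Matrix V V ℚ) : Prop :=
  ∀ i j : V, i ≠ j → NashNN A i j

/-- The dual graph of `A`: edge between distinct `i, j` iff `A i j > 0`. -/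
def dualGraph {V : Type*} (A : Matrix V V ℚ) : SimpleGraph V :=
  SimpleGraph.fromRel fun i j => 0 < A i j

/-- A leaf of a graph: a vertex adjacent to exactly one other vertex. -/
def IsLeaf {V : Type*} (G : SimpleGraph V) (i : V) : Prop :=
  ∃! j, G.Adj i j

open SimpleGraph Walk

section Graph
variable {V : Type*} {G : SimpleGraph V}

/-- base point of a non-nil closed walk lies in the tail of the support -/
lemma base_mem_support_tail {u : V} (w : G.Walk u u) (hw : ¬ w.Nil) :
    u ∈ w.support.tail := by
  cases w with
  | nil => simp at hw
  | cons h p => simpa using p.end_mem_support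

lemma mem_support_tail_of_mem {u x : V} (w : G.Walk u u) (hw : ¬ w.Nil)
    (hx : x ∈ w.support) : x ∈ w.support.tail := by
  rcases (Walk.mem_support_iff _).1 hx with rfl | h
  · exact base_mem_support_tail w hw
  · exact h

lemma mem_support_rotate [DecidableEq V] {u x y : V} (w : G.Walk u u) (hw : ¬ w.Nil)
    (hy : y ∈ w.support) (hx : x ∈ w.support) : x ∈ (w.rotate y hy).support := by
  have := (support_rotate w y hy).mem_iff (a := x)
  exact List.mem_of_mem_tail (this.2 (mem_support_tail_of_mem w hw hx))

/-- From a cycle through `i` and `v`, extract a walk from `i` to `v` avoiding `j`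
(provided `i ≠ j`, `v ≠ j`). -/
lemma exists_walk_avoid [DecidableEq V] {u i v j : V} (w : G.Walk u u) (hc : w.IsCycle)
    (hi : i ∈ w.support) (hv : v ∈ w.support) (hij : i ≠ j) (hvj : v ≠ j) :
    ∃ p : G.Walk i v, j ∉ p.support := by
  by_cases hjw : j ∈ w.support
  · -- rotate the cycle so that it is based at j
    set c := w.rotate j hjw with hcdef
    have hcc : c.IsCycle := hc.rotate hjw
    have hnn := hc.not_nil
    have hi' : i ∈ c.support := mem_support_rotate w hnn hjw hi
    have hv' : v ∈ c.support := mem_support_rotate w hnn hjw hv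
    -- split the cycle at i
    set q1 := c.takeUntil i hi' with hq1
    set q2 := c.dropUntil i hi' with hq2
    have hspec : q1.append q2 = c := c.take_spec hi'
    have hsupp : c.support = q1.support ++ q2.support.tail := by
      rw [← hspec, support_append]
    -- count of j in the support of c is 2
    have hjt : j ∈ c.support.tail := base_mem_support_tail c hcc.not_nil
    have hcount : c.support.count j = 2 := by
      have h1 : c.support = j :: c.support.tail := c.support_eq_cons
      rw [h1, List.count_cons_self, List.count_eq_one_of_mem hcc.support_nodup hjt]
    have hq2j : j ∈ q2.support.tail := by
      have : j ∈ q2.support := q2.end_mem_support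
      rcases (Walk.mem_support_iff _).1 this with h | h
      · exact absurd h.symm hij
      · exact h
    have hcnt2 : q1.support.count j + q2.support.tail.count j = 2 := by
      rw [← List.count_append, ← hsupp, hcount]
    have hq1c : q1.support.count j = 1 := by
      have h1 : 1 ≤ q1.support.count j := List.one_le_count_iff.2 q1.start_mem_support
      have h2 : 1 ≤ q2.support.tail.count j := List.one_le_count_iff.2 hq2j
      omega
    have hq2c : q2.support.tail.count j = 1 := by omega
    -- locate v
    have hv2 : v ∈ q1.support ∨ v ∈ q2.support := by
      have := hv'
      rw [← hspec, mem_support_append_iff] at this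
      exact this
    rcases hv2 with hv1 | hv2
    · -- v on the first arc (from j to i); take dropUntil and reverse
      set r2 := q1.dropUntil v hv1 with hr2
      have hs : q1.support = (q1.takeUntil v hv1).support ++ r2.support.tail := by
        conv_lhs => rw [← q1.take_spec hv1]
        rw [support_append]
      have hjr1 : 1 ≤ (q1.takeUntil v hv1).support.count j :=
        List.one_le_count_iff.2 (q1.takeUntil v hv1).start_mem_support
      have hcnt : (q1.takeUntil v hv1).support.count j + r2.support.tail.count j = 1 := by
        rw [← List.count_append, ← hs, hq1c]
      have hjr2 : j ∉ r2.support := by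
        intro hjm
        rcases (Walk.mem_support_iff _).1 hjm with h | h
        · exact hvj h.symm
        · have := List.one_le_count_iff.2 h; omega
      exact ⟨r2.reverse, by rwa [support_reverse, List.mem_reverse]⟩
    · -- v on the second arc (from i to j); take takeUntil
      set r1 := q2.takeUntil v hv2 with hr1
      have hs : q2.support = r1.support ++ (q2.dropUntil v hv2).support.tail := by
        conv_lhs => rw [← q2.take_spec hv2]
        rw [support_append]
      have hq2full : q2.support.count j = 1 := by
        have h1 : q2.support = i :: q2.support.tail := q2.support_eq_cons
        rw [h1, List.count_cons_of_ne hij, hq2c]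
      have hjd : j ∈ (q2.dropUntil v hv2).support.tail := by
        have : j ∈ (q2.dropUntil v hv2).support := (q2.dropUntil v hv2).end_mem_support
        rcases (Walk.mem_support_iff _).1 this with h | h
        · exact absurd h.symm hvj
        · exact h
      have hcnt : r1.support.count j + (q2.dropUntil v hv2).support.tail.count j = 1 := by
        rw [← List.count_append, ← hs, hq2full]
      have h1 : 1 ≤ (q2.dropUntil v hv2).support.tail.count j := List.one_le_count_iff.2 hjd
      refine ⟨r1, fun hjm => ?_⟩
      have := List.one_le_count_iff.2 hjm; omega
  · -- j not on the cycle at all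
    refine ⟨(w.takeUntil i hi).reverse.append (w.takeUntil v hv), ?_⟩
    rw [mem_support_append_iff, support_reverse]
    push_neg
    constructor
    · intro h; exact hjw (w.support_takeUntil_subset hi (List.mem_reverse.1 h))
    · intro h; exact hjw (w.support_takeUntil_subset hv h)

/-- Propagation along a walk avoiding a barrier vertex `j`. -/
lemma prop_along_walk {P : V → Prop} {j : V}
    (hcl : ∀ s t, P s → s ≠ j → G.Adj s t → P t) :
    ∀ {a v : V} (p : G.Walk a v), j ∉ p.support → P a → P v := by
  intro a v p
  induction p with
  | nil => exact fun _ h => h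
  | cons h q ih =>
    intro hj hP
    rw [support_cons, List.mem_cons] at hj
    push_neg at hj
    exact ih hj.2 (hcl _ _ hP (fun hh => hj.1 hh.symm) h)

/-- Propagation towards the barrier vertex itself. -/
lemma prop_to_barrier' {P : V → Prop} {j : V}
    (hcl : ∀ s t, P s → s ≠ j → G.Adj s t → P t) :
    ∀ {a v : V} (p : G.Walk a v), P a → j ∈ p.support → P j := by
  intro a v p
  induction p with
  | nil => intro h hj; rw [support_nil, List.mem_singleton] at hj; exact hj ▸ h
  | @cons a b c h q ih =>
    intro hP hj
    by_cases hab : a = j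
    · exact hab ▸ hP
    · refine ih (hcl _ _ hP hab h) ?_
      rw [support_cons, List.mem_cons] at hj
      rcases hj with h' | h'
      · exact absurd h'.symm hab
      · exact h'

lemma prop_to_barrier {P : V → Prop} {j : V}
    (hcl : ∀ s t, P s → s ≠ j → G.Adj s t → P t)
    {a : V} (p : G.Walk a j) (hP : P a) : P j :=
  prop_to_barrier' hcl p hP p.end_mem_support

end Graph

section Analytic
variable {n : ℕ} (A : Matrix (Fin n) (Fin n) ℚ)

lemma quadQ (hneg : NegDefQ A) (x : Fin n → ℚ) (hx : x ≠ 0) :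
    ∑ i, ∑ j, x i * A i j * x j < 0 := by
  have hx' : (fun i => (x i : ℝ)) ≠ 0 := by
    intro h
    apply hx
    funext i
    have := congrFun h i
    simpa using this
  have h0 := hneg _ hx'
  have hcast : ((∑ i, ∑ j, x i * A i j * x j : ℚ) : ℝ)
      = ∑ i, ∑ j, (x i : ℝ) * (A i j : ℝ) * (x j : ℝ) := by
    push_cast
    ring_nf
  have : ((∑ i, ∑ j, x i * A i j * x j : ℚ) : ℝ) < 0 := by rw [hcast]; exact h0
  exact_mod_cast this

lemma detQ_ne (hneg : NegDefQ A) : A.det ≠ 0 := by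
  intro h
  obtain ⟨v, hv, hAv⟩ := (Matrix.exists_mulVec_eq_zero_iff).2 h
  have hq := quadQ A hneg v hv
  have hz : ∑ i, ∑ j, v i * A i j * v j = 0 := by
    have h4 : ∀ i, ∑ j, v i * A i j * v j = v i * (A.mulVec v i) := by
      intro i
      rw [Matrix.mulVec, dotProduct, Finset.mul_sum]
      exact Finset.sum_congr rfl fun j _ => by ring
    rw [Finset.sum_congr rfl fun i _ => h4 i, hAv]
    simp
  rw [hz] at hq
  exact lt_irrefl _ hq

/-- Solvability of linear systems with a negative definite matrix. -/
lemma exists_solution (hneg : NegDefQ A) (b : Fin n → ℚ) :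
    ∃ Y : Fin n → ℚ, A.mulVec Y = b := by
  have hdet : IsUnit A.det := isUnit_iff_ne_zero.2 (detQ_ne A hneg)
  refine ⟨A⁻¹.mulVec b, ?_⟩
  rw [Matrix.mulVec_mulVec, Matrix.mul_nonsing_inv A hdet, Matrix.one_mulVec]

/-- Sign lemma: if `A Y = b` with `b ≤ 0` entrywise, then `Y ≥ 0` entrywise. -/
lemma nonneg_of_mulVec_nonpos (hneg : NegDefQ A)
    (hoff : ∀ i j, i ≠ j → 0 ≤ A i j)
    {Y b : Fin n → ℚ} (hsol : A.mulVec Y = b) (hb : ∀ k, b k ≤ 0) :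
    ∀ k, 0 ≤ Y k := by
  by_contra hcon
  push_neg at hcon
  obtain ⟨k0, hk0⟩ := hcon
  set Z : Fin n → ℚ := fun k => if Y k < 0 then -Y k else 0 with hZ
  have hZnn : ∀ k, 0 ≤ Z k := by
    intro k; simp only [hZ]; split <;> [linarith; rfl]
  have hZne : Z ≠ 0 := by
    intro h
    have := congrFun h k0
    simp only [hZ, if_pos hk0] at this
    simp at this
    linarith
  have hquad := quadQ A hneg Z hZne
  have hkey : ∑ k, Z k * b k = (∑ k, ∑ t, Z k * A k t * (Y t + Z t))
      - ∑ k, ∑ t, Z k * A k t * Z t := by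
    rw [← Finset.sum_sub_distrib]
    refine Finset.sum_congr rfl fun k _ => ?_
    rw [← Finset.sum_sub_distrib]
    have h5 : Z k * b k = ∑ t, Z k * (A k t * Y t) := by
      rw [← Finset.mul_sum]
      congr 1
      rw [← hsol]
      rfl
    rw [h5]
    exact Finset.sum_congr rfl fun t _ => by ring
  have h1 : 0 ≤ ∑ k, ∑ t, Z k * A k t * (Y t + Z t) := by
    refine Finset.sum_nonneg fun k _ => Finset.sum_nonneg fun t _ => ?_
    have hYZ : 0 ≤ Y t + Z t := by
      simp only [hZ]; split <;> [linarith; linarith]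
    rcases eq_or_ne k t with rfl | hkt
    · rcases lt_or_ge (Y k) 0 with h | h
      · have h6 : Y k + Z k = 0 := by simp [hZ, if_pos h]
        rw [h6, mul_zero]
      · have h6 : Z k = 0 := by simp [hZ, not_lt.2 h]
        simp [h6]
    · exact mul_nonneg (mul_nonneg (hZnn k) (hoff k t hkt)) hYZ
  have h2 : ∑ k, Z k * b k ≤ 0 :=
    Finset.sum_nonpos fun k _ => mul_nonpos_of_nonneg_of_nonpos (hZnn k) (hb k)
  linarith

/-- If a row sum `(AY)_k` is negative and `Y ≥ 0`, then `Y k > 0`. -/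
lemma pos_of_row_neg (hoff : ∀ i j, i ≠ j → 0 ≤ A i j)
    {Y : Fin n → ℚ} (hY : ∀ k, 0 ≤ Y k) {k : Fin n}
    (hrow : ∑ t, A k t * Y t < 0) : 0 < Y k := by
  rcases (hY k).lt_or_eq with h | h
  · exact h
  · exfalso
    have h7 : 0 ≤ ∑ t, A k t * Y t := by
      refine Finset.sum_nonneg fun t _ => ?_
      rcases eq_or_ne k t with rfl | hkt
      · rw [← h, mul_zero]
      · exact mul_nonneg (hoff k t hkt) (hY t)
    linarith

lemma dual_adj (hsym : ∀ i j, A i j = A j i) {s t : Fin n} :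
    (dualGraph A).Adj s t ↔ s ≠ t ∧ 0 < A s t := by
  simp only [dualGraph, SimpleGraph.fromRel_adj]
  constructor
  · rintro ⟨h1, h2 | h2⟩
    · exact ⟨h1, h2⟩
    · exact ⟨h1, (hsym s t) ▸ h2⟩
  · rintro ⟨h1, h2⟩; exact ⟨h1, Or.inl h2⟩

lemma green_max (hn : 3 ≤ n)
    (hsym : ∀ i j, A i j = A j i)
    (hoff : ∀ i j, i ≠ j → 0 ≤ A i j) (hneg : NegDefQ A)
    (hgen : ∀ i j : Fin n, i ≠ j → ∃ (v : Fin n) (w : (dualGraph A).Walk v v),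
      w.IsCycle ∧ i ∈ w.support ∧ j ∈ w.support)
    (hC : ∀ i, ∑ j, A i j ≤ 0)
    (hpq : ∃ p q : Fin n, p ≠ q ∧ ∑ t, A p t < 0 ∧ ∑ t, A q t < 0)
    (j : Fin n) {W : Fin n → ℚ}
    (hsol : A.mulVec W = fun k => if k = j then (-1 : ℚ) else 0) :
    (∀ k, 0 ≤ W k) ∧ ∀ i, i ≠ j → W i < W j := by
  have hne : Nonempty (Fin n) := ⟨⟨0, by omega⟩⟩
  have hrow : ∀ k, ∑ t, A k t * W t = if k = j then (-1 : ℚ) else 0 := by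
    intro k
    have := congrFun hsol k
    simpa [Matrix.mulVec, dotProduct] using this
  have hWnn : ∀ k, 0 ≤ W k := by
    refine nonneg_of_mulVec_nonpos A hneg hoff hsol fun k => ?_
    split <;> norm_num
  refine ⟨hWnn, ?_⟩
  have hWj : 0 < W j := by
    refine pos_of_row_neg A hoff hWnn ?_
    rw [hrow j, if_pos rfl]; norm_num
  obtain ⟨m, -, hm⟩ := Finset.exists_max_image (Finset.univ : Finset (Fin n)) W
    ⟨j, Finset.mem_univ j⟩
  set μ := W m with hμ
  have hμpos : 0 < μ := lt_of_lt_of_le hWj (hm j (Finset.mem_univ j))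
  have hclosure : ∀ s, W s = μ → s ≠ j →
      (∀ t, 0 < A s t → W t = μ) ∧ ∑ t, A s t = 0 := by
    intro s hs hsj
    have hrs : ∑ t, A s t * W t = 0 := by rw [hrow s, if_neg hsj]
    have hL : ∑ t, A s t * (W t - μ) = -(μ * ∑ t, A s t) := by
      have h1 : ∑ t, A s t * (W t - μ) = (∑ t, A s t * W t) - μ * ∑ t, A s t := by
        rw [Finset.mul_sum, ← Finset.sum_sub_distrib]
        exact Finset.sum_congr rfl fun t _ => by ring
      rw [h1, hrs]; ring
    have hterms : ∀ t ∈ Finset.univ, A s t * (W t - μ) ≤ 0 := by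
      intro t _
      rcases eq_or_ne s t with rfl | hst
      · rw [hs]; simp
      · exact mul_nonpos_of_nonneg_of_nonpos (hoff s t hst)
          (by linarith [hm t (Finset.mem_univ t)])
    have hLle : ∑ t, A s t * (W t - μ) ≤ 0 := Finset.sum_nonpos hterms
    have hLge : 0 ≤ -(μ * ∑ t, A s t) := by
      have := hC s
      nlinarith
    have hLzero : ∑ t, A s t * (W t - μ) = 0 := le_antisymm hLle (by linarith [hL ▸ hLge])
    have hallzero := (Finset.sum_eq_zero_iff_of_nonpos hterms).1 hLzero
    constructor
    · intro t ht
      have := hallzero t (Finset.mem_univ t)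
      have h2 : W t - μ = 0 := by
        rcases mul_eq_zero.1 this with h | h
        · exact absurd h (ne_of_gt ht)
        · exact h
      linarith
    · have h3 : μ * ∑ t, A s t = 0 := by
        rw [hLzero] at hL
        linarith
      rcases mul_eq_zero.1 h3 with h | h
      · exact absurd h (ne_of_gt hμpos)
      · exact h
  intro i hij
  by_contra hcon
  push_neg at hcon
  obtain ⟨i0, hi0j, hi0⟩ : ∃ i0, i0 ≠ j ∧ W i0 = μ := by
    rcases eq_or_ne m j with rfl | hmj
    · exact ⟨i, hij, le_antisymm (hm i (Finset.mem_univ i))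
        (le_trans hcon (le_refl _))⟩
    · exact ⟨m, hmj, rfl⟩
  have hcl : ∀ s t, W s = μ → s ≠ j → (dualGraph A).Adj s t → W t = μ := by
    intro s t hs hsj hadj
    exact (hclosure s hs hsj).1 t ((dual_adj A hsym).1 hadj).2
  have hall : ∀ v, v ≠ j → W v = μ := by
    intro v hvj
    rcases eq_or_ne v i0 with rfl | hvi0
    · exact hi0
    · obtain ⟨u, w, hw, hi0w, hvw⟩ := hgen i0 v (Ne.symm hvi0)
      obtain ⟨p, hp⟩ := exists_walk_avoid w hw hi0w hvw hi0j hvj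
      exact prop_along_walk hcl p hp hi0
  obtain ⟨p, q, hpqne, hp, hq⟩ := hpq
  have key : ∀ v, v ≠ j → ∑ t, A v t = 0 := fun v hvj =>
    (hclosure v (hall v hvj) hvj).2
  rcases eq_or_ne p j with rfl | hpj
  · have := key q (fun h => hpqne h.symm)
    rw [this] at hq
    exact lt_irrefl _ hq
  · have := key p hpj
    rw [this] at hp
    exact lt_irrefl _ hp

end Analytic

theorem generalized_cycle_NN_iff (n : ℕ) (hn : 3 ≤ n) (A : Matrix (Fin n) (Fin n) ℚ)
    (hsym : ∀ i j, A i j = A j i) (hdiag : ∀ i, A i i < 0)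
    (hoff : ∀ i j, i ≠ j → 0 ≤ A i j) (hneg : NegDefQ A)
    (hgen : ∀ i j : Fin n, i ≠ j → ∃ (v : Fin n) (w : (dualGraph A).Walk v v),
      w.IsCycle ∧ i ∈ w.support ∧ j ∈ w.support)
    (hC : ∀ i, ∑ j, A i j ≤ 0) :
    NashNNAll A ↔ ∃ i j : Fin n, i ≠ j ∧ ∑ t, A i t < 0 ∧ ∑ t, A j t < 0 := by
  have hnefin : Nonempty (Fin n) := ⟨⟨0, by omega⟩⟩
  constructor
  · -- forward direction
    intro hNN
    -- at least one negative row sum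
    have hone : ∃ p : Fin n, ∑ t, A p t < 0 := by
      have h1 := quadQ A hneg (fun _ => 1) (by
        intro h
        have := congrFun h (Classical.arbitrary (Fin n))
        norm_num at this)
      simp only [one_mul, mul_one] at h1
      by_contra hcon
      push_neg at hcon
      have : (0:ℚ) ≤ ∑ i, ∑ j, A i j :=
        Finset.sum_nonneg fun i _ => hcon i
      linarith
    obtain ⟨p, hp⟩ := hone
    by_contra hcon
    push_neg at hcon
    -- all row sums other than p vanish
    have hzero : ∀ k, k ≠ p → ∑ t, A k t = 0 := by
      intro k hk
      rcases (hC k).lt_or_eq with h | h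
      · exact absurd hp (not_lt.2 (hcon k p hk h))
      · exact h
    -- pick j ≠ p
    obtain ⟨j, hj⟩ := Fintype.exists_ne_of_one_lt_card (by simp; omega) p
    obtain ⟨X, hXpos, hXrow, hXlt⟩ := hNN j p hj (fun _ => 0) (fun _ => le_refl 0)
    set x : Fin n → ℚ := fun k => (X k : ℚ) with hx
    obtain ⟨m, -, hm⟩ := Finset.exists_min_image (Finset.univ : Finset (Fin n)) x
      ⟨p, Finset.mem_univ p⟩
    set μ := x m with hμ
    have hxlt : x j < x p := by
      simp only [hx]
      exact_mod_cast hXlt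
    have hcl : ∀ s t, x s = μ → s ≠ p → (dualGraph A).Adj s t → x t = μ := by
      intro s t hs hsp hadj
      have hrs : ∑ u, A s u * x u ≤ 0 := hXrow s
      have hL : ∑ u, A s u * (x u - μ) = (∑ u, A s u * x u) - μ * ∑ u, A s u := by
        rw [Finset.mul_sum, ← Finset.sum_sub_distrib]
        exact Finset.sum_congr rfl fun u _ => by ring
      rw [hzero s hsp, mul_zero, sub_zero] at hL
      have hterms : ∀ u ∈ Finset.univ, 0 ≤ A s u * (x u - μ) := by
        intro u _
        rcases eq_or_ne s u with rfl | hsu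
        · rw [hs]; simp
        · exact mul_nonneg (hoff s u hsu) (by linarith [hm u (Finset.mem_univ u)])
      have hLge : 0 ≤ ∑ u, A s u * (x u - μ) := Finset.sum_nonneg hterms
      have hLzero : ∑ u, A s u * (x u - μ) = 0 := le_antisymm (by rw [hL]; exact hrs) hLge
      have hallzero := (Finset.sum_eq_zero_iff_of_nonneg hterms).1 hLzero
      have hAst : 0 < A s t := ((dual_adj A hsym).1 hadj).2
      have := hallzero t (Finset.mem_univ t)
      have h2 : x t - μ = 0 := by
        rcases mul_eq_zero.1 this with h | h
        · exact absurd h (ne_of_gt hAst)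
        · exact h
      linarith
    -- m ≠ p and reach p
    have hmμ : μ ≤ x j := hm j (Finset.mem_univ j)
    have hmp : m ≠ p := by
      intro h
      have hle : x p ≤ x j := by rw [← h]; exact hmμ
      linarith
    obtain ⟨u, w, hw, hmw, hpw⟩ := hgen m p hmp
    have hreach : (dualGraph A).Walk m p :=
      ((w.takeUntil m hmw).reverse.append (w.takeUntil p hpw))
    have hxp : x p = μ :=
      prop_to_barrier (P := fun v => x v = μ) hcl hreach hμ.symm
    rw [hxp] at hxlt
    linarith
  · -- backward direction
    intro hex
    intro i j hij C hCnp
    -- solve A Y = C - 1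
    obtain ⟨Y, hYsol⟩ := exists_solution A hneg (fun k => C k - 1)
    have hYrow : ∀ k, ∑ t, A k t * Y t = C k - 1 := by
      intro k
      have := congrFun hYsol k
      simpa [Matrix.mulVec, dotProduct] using this
    have hYnn : ∀ k, 0 ≤ Y k :=
      nonneg_of_mulVec_nonpos A hneg hoff hYsol fun k => by
        have := hCnp k; linarith
    have hYpos : ∀ k, 0 < Y k := by
      intro k
      refine pos_of_row_neg A hoff hYnn ?_
      rw [hYrow k]
      have := hCnp k; linarith
    -- solve A W = -e_j
    obtain ⟨W, hWsol⟩ := exists_solution A hneg (fun k => if k = j then (-1:ℚ) else 0)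
    obtain ⟨hWnn, hWmax⟩ := green_max A hn hsym hoff hneg hgen hC hex j hWsol
    have hWrow : ∀ k, ∑ t, A k t * W t = if k = j then (-1:ℚ) else 0 := by
      intro k
      have := congrFun hWsol k
      simpa [Matrix.mulVec, dotProduct] using this
    have hWij : W i < W j := hWmax i hij
    -- the scaling factor
    set t0 : ℚ := (|Y i - Y j| + 1) / (W j - W i) with ht0
    have hWd : 0 < W j - W i := by linarith
    have ht0pos : 0 < t0 := by
      apply div_pos
      · have := abs_nonneg (Y i - Y j); linarith
      · exact hWd
    set Z : Fin n → ℚ := fun k => Y k + t0 * W k with hZ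
    have hZpos : ∀ k, 0 < Z k := fun k => by
      have := hYpos k
      have := hWnn k
      have := ht0pos
      simp only [hZ]
      nlinarith
    have hZrow : ∀ k, ∑ t, A k t * Z t = (C k - 1) + t0 * (if k = j then (-1:ℚ) else 0) := by
      intro k
      simp only [hZ]
      have h1 : ∑ t, A k t * (Y t + t0 * W t)
          = (∑ t, A k t * Y t) + t0 * ∑ t, A k t * W t := by
        rw [Finset.mul_sum, ← Finset.sum_add_distrib]
        exact Finset.sum_congr rfl fun t _ => by ring
      rw [h1, hYrow, hWrow]
    have hZij : Z i < Z j := by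
      simp only [hZ]
      have h2 : t0 * (W j - W i) = |Y i - Y j| + 1 := by
        rw [ht0]
        field_simp
      nlinarith [abs_nonneg (Y i - Y j), le_abs_self (Y i - Y j), neg_abs_le (Y i - Y j)]
    -- clear denominators
    set d : ℕ := ∏ t, (Z t).den with hd
    have hdpos : 0 < d := Finset.prod_pos fun t _ => (Z t).pos
    set X : Fin n → ℤ := fun k => (Z k).num * ∏ t ∈ Finset.univ.erase k, ((Z t).den : ℤ)
      with hX
    have hcast : ∀ k, (X k : ℚ) = Z k * d := by
      intro k
      have hden : ((Z k).den : ℚ) ≠ 0 := by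
        exact_mod_cast (Z k).den_nz
      have hnum : ((Z k).num : ℚ) = Z k * (Z k).den := by
        have h8 := Rat.num_div_den (Z k)
        rw [div_eq_iff hden] at h8
        exact h8
      simp only [hX]
      push_cast
      rw [hnum]
      rw [mul_assoc, hd]
      congr 1
      push_cast
      rw [← Finset.mul_prod_erase Finset.univ (fun t => ((Z t).den : ℚ))
        (Finset.mem_univ k)]
    have hd1 : (1:ℚ) ≤ d := by exact_mod_cast hdpos
    refine ⟨X, ?_, ?_, ?_⟩
    · intro k
      have : (0:ℚ) < (X k : ℚ) := by
        rw [hcast k]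
        exact mul_pos (hZpos k) (by exact_mod_cast hdpos)
      exact_mod_cast this
    · intro k
      have h1 : ∑ t, A k t * (X t : ℚ) = d * ∑ t, A k t * Z t := by
        rw [Finset.mul_sum]
        exact Finset.sum_congr rfl fun t _ => by rw [hcast t]; ring
      rw [h1, hZrow]
      have hCk := hCnp k
      rcases eq_or_ne k j with rfl | hkj
      · rw [if_pos rfl]
        nlinarith
      · rw [if_neg hkj]
        nlinarith
    · have : (X i : ℚ) < (X j : ℚ) := by
        rw [hcast i, hcast j]
        have : (0:ℚ) < d := by exact_mod_cast hdpos
        nlinarith [hZij]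
      exact_mod_cast this
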